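/- Every isomorphism of real Lie algebras between (the underlying real Lie algebras of) two finite-dimensional complex simple Lie algebras is either ℂ-linear or ℂ-antilinear. -/
import Mathlib

private lemma smul_decomp' {V : Type*} [AddCommGroup V] [Module ℝ V] [Module ℂ V]
    [IsScalarTower ℝ ℂ V] (c : ℂ) (v : V) :
    c • v = c.re • v + c.im • (Complex.I • v) := by
  have h1 : (c.re : ℂ) • v = c.re • v := algebraMap_smul ℂ c.re v
  have h2 : (c.im : ℂ) • (Complex.I • v) = c.im • (Complex.I • v) :=
    algebraMap_smul ℂ c.im _
  conv_lhs => rw [← Complex.re_add_im c]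
  rw [add_smul, mul_smul, h1, h2]

/-- Lemma 6 of Delorme.
Every isomorphism of real Lie algebras between (the underlying real Lie algebras of) two
finite-dimensional complex simple Lie algebras is either `ℂ`-linear or `ℂ`-antilinear. -/
theorem real_iso_of_complex_simple_is_linear_or_antilinear
    (g₁ : Type*) [LieRing g₁] [LieAlgebra ℝ g₁] [LieAlgebra ℂ g₁] [IsScalarTower ℝ ℂ g₁]
    [FiniteDimensional ℂ g₁] [LieAlgebra.IsSimple ℂ g₁]
    (g₂ : Type*) [LieRing g₂] [LieAlgebra ℝ g₂] [LieAlgebra ℂ g₂] [IsScalarTower ℝ ℂ g₂]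
    [FiniteDimensional ℂ g₂] [LieAlgebra.IsSimple ℂ g₂]
    (f : g₁ →ₗ[ℝ] g₂) (hbij : Function.Bijective f)
    (hbracket : ∀ x y : g₁, f ⁅x, y⁆ = ⁅f x, f y⁆) :
    (∀ (c : ℂ) (x : g₁), f (c • x) = c • f x) ∨
    (∀ (c : ℂ) (x : g₁), f (c • x) = (starRingEnd ℂ c) • f x) := by
  classical
  set e : g₁ ≃ₗ[ℝ] g₂ := LinearEquiv.ofBijective f hbij with he
  have hef : ∀ a : g₁, e a = f a := fun a => rfl
  have hsymm : ∀ a : g₁, e.symm (f a) = a := fun a => by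
    rw [← hef a, e.symm_apply_apply]
  have hfs : ∀ v : g₂, f (e.symm v) = v := fun v => by
    rw [← hef, e.apply_symm_apply]
  -- the transported multiplication-by-I operator on g₂
  set T : g₂ → g₂ := fun v => f (Complex.I • e.symm v) with hT
  have hTf : ∀ a : g₁, T (f a) = f (Complex.I • a) := fun a => by
    simp only [hT, hsymm]
  -- T is additive and ℝ-linear
  have hTadd : ∀ v w : g₂, T (v + w) = T v + T w := fun v w => by
    simp only [hT, map_add, smul_add]
  have hTzero : T 0 = 0 := by simp [hT]
  have hTreal : ∀ (r : ℝ) (v : g₂), T (r • v) = r • T v := fun r v => by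
    simp only [hT, map_smul]
    rw [smul_comm, map_smul]
  -- centroid properties
  have hTlie₁ : ∀ v w : g₂, T ⁅v, w⁆ = ⁅T v, w⁆ := by
    intro v w
    have h : ⁅v, w⁆ = f ⁅e.symm v, e.symm w⁆ := by
      rw [hbracket, hfs, hfs]
    rw [h, hTf, ← smul_lie, hbracket, ← hTf, hfs, hfs]
  have hTlie₂ : ∀ v w : g₂, T ⁅v, w⁆ = ⁅v, T w⁆ := by
    intro v w
    have h : ⁅v, w⁆ = f ⁅e.symm v, e.symm w⁆ := by
      rw [hbracket, hfs, hfs]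
    rw [h, hTf, ← lie_smul, hbracket, ← hTf, hfs, hfs]
  -- T ∘ T = -1
  have hTT : ∀ v : g₂, T (T v) = -v := by
    intro v
    rw [hT]
    simp only [hsymm, smul_smul, Complex.I_mul_I, neg_smul, one_smul, map_neg]
    rw [hfs]
  -- the ℝ-span of brackets in g₂
  set S : Set g₂ := {z : g₂ | ∃ x y : g₂, ⁅x, y⁆ = z} with hS
  set p₀ : Submodule ℝ g₂ := Submodule.span ℝ S with hp₀
  have hImem : ∀ v ∈ p₀, Complex.I • v ∈ p₀ := by
    intro v hv
    induction hv using Submodule.span_induction with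
    | mem z hz =>
      obtain ⟨x, y, rfl⟩ := hz
      exact Submodule.subset_span ⟨Complex.I • x, y, smul_lie _ _ _⟩
    | zero => simp
    | add x y _ _ hx hy => rw [smul_add]; exact p₀.add_mem hx hy
    | smul r x _ hx => rw [smul_comm]; exact p₀.smul_mem r hx
  have hLiemem : ∀ (z : g₂), ∀ v ∈ p₀, ⁅z, v⁆ ∈ p₀ := by
    intro z v hv
    induction hv using Submodule.span_induction with
    | mem w hw => exact Submodule.subset_span ⟨z, w, rfl⟩
    | zero => simp
    | add x y _ _ hx hy => rw [lie_add]; exact p₀.add_mem hx hy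
    | smul r x _ hx => rw [lie_smul]; exact p₀.smul_mem r hx
  -- upgrade to a complex Lie ideal
  set p : Submodule ℂ g₂ :=
    { carrier := (p₀ : Set g₂)
      zero_mem' := p₀.zero_mem
      add_mem' := fun h1 h2 => p₀.add_mem h1 h2
      smul_mem' := by
        intro c v hv
        rw [SetLike.mem_coe] at hv ⊢
        rw [smul_decomp' c v]
        exact p₀.add_mem (p₀.smul_mem _ hv) (p₀.smul_mem _ (hImem v hv)) } with hp
  set Idl : LieIdeal ℂ g₂ :=
    { p with
      lie_mem := by
        intro x m hm
        exact hLiemem x m hm } with hIdl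
  have hmemIdl : ∀ v : g₂, (v ∈ Idl ↔ v ∈ p₀) := fun v => Iff.rfl
  have htop : ∀ v : g₂, v ∈ p₀ := by
    rcases (inferInstance : LieAlgebra.IsSimple ℂ g₂).eq_bot_or_eq_top Idl with hbot | htop
    · exfalso
      apply (inferInstance : LieAlgebra.IsSimple ℂ g₂).non_abelian
      constructor
      intro x y
      have : ⁅x, y⁆ ∈ Idl := Submodule.subset_span ⟨x, y, rfl⟩
      rwa [hbot, LieSubmodule.mem_bot] at this
    · intro v
      have : v ∈ Idl := htop ▸ LieSubmodule.mem_top v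
      exact this
  -- T commutes with multiplication by I
  have hcomm : ∀ v : g₂, T (Complex.I • v) = Complex.I • T v := by
    intro v
    have hv := htop v
    induction hv using Submodule.span_induction with
    | mem z hz =>
      obtain ⟨x, y, rfl⟩ := hz
      calc T (Complex.I • ⁅x, y⁆) = T ⁅x, Complex.I • y⁆ := by rw [lie_smul]
        _ = ⁅T x, Complex.I • y⁆ := hTlie₁ _ _
        _ = Complex.I • ⁅T x, y⁆ := by rw [lie_smul]
        _ = Complex.I • T ⁅x, y⁆ := by rw [hTlie₁]
    | zero => simp [hTzero]
    | add x y _ _ hx hy => rw [smul_add, hTadd, hx, hy, hTadd, smul_add]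
    | smul r x _ hx =>
      rw [smul_comm, hTreal, hx, hTreal, smul_comm]
  -- hence T is ℂ-linear
  have hClin : ∀ (c : ℂ) (v : g₂), T (c • v) = c • T v := by
    intro c v
    rw [smul_decomp' c v, hTadd, hTreal, hTreal, hcomm, smul_decomp' c (T v)]
  -- the eigenspace {v | T v = I • v} is a complex Lie ideal
  set K : LieIdeal ℂ g₂ :=
    { carrier := {v : g₂ | T v = Complex.I • v}
      zero_mem' := by simp [hTzero]
      add_mem' := by
        intro a b ha hb
        simp only [Set.mem_setOf_eq] at ha hb ⊢
        rw [hTadd, ha, hb, smul_add]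
      smul_mem' := by
        intro c v hv
        simp only [Set.mem_setOf_eq] at hv ⊢
        rw [hClin, hv, smul_comm]
      lie_mem := by
        intro x m hm
        simp only [Set.mem_setOf_eq] at hm ⊢
        rw [hTlie₂, hm, lie_smul] } with hK
  have hmemK : ∀ v : g₂, v ∈ K ↔ T v = Complex.I • v := fun v => Iff.rfl
  rcases (inferInstance : LieAlgebra.IsSimple ℂ g₂).eq_bot_or_eq_top K with hbot | htopK
  · -- K = ⊥ : T = -I•, f is antilinear
    right
    have hTv : ∀ v : g₂, T v = -(Complex.I • v) := by
      intro v
      have hw : T (T v + Complex.I • v) = Complex.I • (T v + Complex.I • v) := by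
        rw [hTadd, hTT, hcomm, smul_add, smul_smul, Complex.I_mul_I, neg_smul, one_smul]
        abel
      have : T v + Complex.I • v ∈ K := hw
      rw [hbot, LieSubmodule.mem_bot] at this
      linear_combination (norm := module) this
    have hfI : ∀ a : g₁, f (Complex.I • a) = -(Complex.I • f a) := by
      intro a
      rw [← hTf, hTv]
    intro c x
    rw [smul_decomp' c x, map_add, map_smul, map_smul, hfI,
      smul_decomp' ((starRingEnd ℂ) c) (f x)]
    simp only [Complex.conj_re, Complex.conj_im, smul_neg, neg_smul]
  · -- K = ⊤ : T = I•, f is linear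
    left
    have hTv : ∀ v : g₂, T v = Complex.I • v := by
      intro v
      have : v ∈ K := htopK ▸ LieSubmodule.mem_top v
      exact this
    have hfI : ∀ a : g₁, f (Complex.I • a) = Complex.I • f a := by
      intro a
      rw [← hTf, hTv]
    intro c x
    rw [smul_decomp' c x, map_add, map_smul, map_smul, hfI, smul_decomp' c (f x)]
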